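/- Let κ be a normal function with κ_0 = 0, α an epsilon number, and ν divisible by κ_α. Define ι(α·δ + γ) = ν + κ_α·δ + κ_γ for γ < α on an initial segment D of the ordinals. If D is bounded and closed under the relevant operations (i.e., D is a closed initial segment [0, λ_max]), then the image ι[D] has a maximal element, namely ι(λ_max), and ι restricted to D is an order isomorphism onto its image. -/

import Mathlib

open Ordinal

/-- If ι(α·δ + γ) = ν + κ_α·δ + κ_γ is defined on a bounded closed initial
segment D = [0, λ_max], then ι[D] has maximal element ι(λ_max) and ι is an
order isomorphism of D onto its image (strictly order preserving). -/
theorem stmt19 (κ : Ordinal → Ordinal) (α ν lamMax : Ordinal)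
    (ι : Ordinal → Ordinal)
    (hκ : Order.IsNormal κ) (h0 : κ 0 = 0)
    (heps : (omega0 : Ordinal) ^ α = α)
    (hν : ∃ ξ, ν = κ α * ξ)
    (hι : ∀ δ γ : Ordinal, γ < α → α * δ + γ ≤ lamMax →
      ι (α * δ + γ) = ν + κ α * δ + κ γ) :
    (ι lamMax ∈ ι '' Set.Iic lamMax ∧ ∀ z ∈ ι '' Set.Iic lamMax, z ≤ ι lamMax) ∧
    ∀ x y : Ordinal, x ≤ lamMax → y ≤ lamMax → (x < y ↔ ι x < ι y) := by
  have hα : α ≠ 0 := by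
    intro h
    rw [h, Ordinal.opow_zero] at heps
    exact one_ne_zero heps
  have hsm := hκ.strictMono
  have key : ∀ x y, x < y → y ≤ lamMax → ι x < ι y := by
    intro x y hxy hy
    have hx : x ≤ lamMax := hxy.le.trans hy
    have hdx := Ordinal.div_add_mod x α
    have hdy := Ordinal.div_add_mod y α
    have hmx : x % α < α := Ordinal.mod_lt x hα
    have hmy : y % α < α := Ordinal.mod_lt y hα
    have ex := hι (x / α) (x % α) hmx (by rw [hdx]; exact hx)
    have ey := hι (y / α) (y % α) hmy (by rw [hdy]; exact hy)
    rw [hdx] at ex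
    rw [hdy] at ey
    rw [ex, ey]
    have hdiv : x / α ≤ y / α := by
      rw [Ordinal.le_div hα]
      calc α * (x / α) ≤ α * (x / α) + x % α := le_self_add
        _ = x := hdx
        _ ≤ y := hxy.le
    rcases lt_or_eq_of_le hdiv with hd | hd
    · have h1 : κ α * (x / α) + κ (x % α) < κ α * (y / α) := by
        calc κ α * (x / α) + κ (x % α) < κ α * (x / α) + κ α :=
              add_lt_add_right (hsm hmx) _
          _ = κ α * Order.succ (x / α) := (Ordinal.mul_succ _ _).symm
          _ ≤ κ α * (y / α) := mul_le_mul_right (Order.succ_le_of_lt hd) _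
      calc ν + κ α * (x / α) + κ (x % α)
          = ν + (κ α * (x / α) + κ (x % α)) := by rw [add_assoc]
        _ < ν + κ α * (y / α) := add_lt_add_right h1 _
        _ ≤ ν + κ α * (y / α) + κ (y % α) := le_self_add
    · rw [hd]
      apply add_lt_add_right
      apply hsm
      have : α * (y / α) + x % α < α * (y / α) + y % α := by
        rw [← hd] at hdy ⊢
        rw [hdx, hdy]
        exact hxy
      exact (add_lt_add_iff_left _).1 this
  have mono : ∀ x y, x ≤ y → y ≤ lamMax → ι x ≤ ι y := by
    intro x y hxy hy
    rcases lt_or_eq_of_le hxy with h | h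
    · exact (key x y h hy).le
    · rw [h]
  refine ⟨⟨⟨lamMax, Set.mem_Iic.2 le_rfl, rfl⟩, ?_⟩, ?_⟩
  · rintro z ⟨u, hu, rfl⟩
    exact mono u lamMax hu le_rfl
  · intro x y hx hy
    constructor
    · intro h; exact key x y h hy
    · intro h
      by_contra hn
      exact absurd h (not_lt.2 (mono y x (not_lt.1 hn) hx))
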